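/- Let U be a 2×2 unitary matrix and suppose that for every matrix Â in a spanning family of M₂(ℂ), both Â and UÂU† lie in the set of matrices having one of the four patterns [[α,β],[0,0]], [[α,0],[0,β]], [[0,β],[α,0]], [[0,0],[α,β]] (α, β ∈ ℂ). Then U is of the form diag(ω, ω'), antidiag(ω, ω'), or ω''·(1/√2)·[[ω', -ω*],[ω, ω'*]] with |ω|=|ω'|=|ω''|=1. Consequently the basis {U|0⟩, U|1⟩} of ℂ², as an unordered pair of rank-1 projectors, is either {|0⟩⟨0|, |1⟩⟨1|} or equals {R_z(θ)|+⟩⟨+|R_z(θ)†, R_z(θ)|−⟩⟨−|R_z(θ)†} for some θ. -/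

import Mathlib

open Matrix Complex ComplexConjugate

noncomputable section

/-- The four admissible patterns `[[α,β],[0,0]]`, `[[α,0],[0,β]]`, `[[0,β],[α,0]]`,
`[[0,0],[α,β]]`. -/
def HasPattern (A : Matrix (Fin 2) (Fin 2) ℂ) : Prop :=
  ∃ α β : ℂ, A = !![α, β; 0, 0] ∨ A = !![α, 0; 0, β] ∨
    A = !![0, β; α, 0] ∨ A = !![0, 0; α, β]

def E00 : Matrix (Fin 2) (Fin 2) ℂ := !![1, 0; 0, 0]
def E11 : Matrix (Fin 2) (Fin 2) ℂ := !![0, 0; 0, 1]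

/-- Projector onto `|+⟩`. -/
def Pplus : Matrix (Fin 2) (Fin 2) ℂ := (2 : ℂ)⁻¹ • !![1, 1; 1, 1]
/-- Projector onto `|−⟩`. -/
def Pminus : Matrix (Fin 2) (Fin 2) ℂ := (2 : ℂ)⁻¹ • !![1, -1; -1, 1]
/-- `R_z(θ) = |0⟩⟨0| + e^{iθ}|1⟩⟨1|`. -/
def Rz (θ : ℝ) : Matrix (Fin 2) (Fin 2) ℂ := !![1, 0; 0, Complex.exp (θ * Complex.I)]

private lemma pattern_mul {A : Matrix (Fin 2) (Fin 2) ℂ} (h : HasPattern A) :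
    A 0 0 * A 1 0 = 0 ∧ A 0 1 * A 1 1 = 0 := by
  obtain ⟨α, β, h | h | h | h⟩ := h <;> subst h <;> constructor <;> simp

private lemma norm_one_of {z : ℂ} (h : z * conj z = 1) : ‖z‖ = 1 := by
  have h2 : Complex.normSq z = 1 := by
    have := Complex.mul_conj z
    rw [this] at h; exact_mod_cast h
  have h3 : ‖z‖ ^ 2 = 1 := by rw [Complex.sq_norm, h2]
  nlinarith [norm_nonneg z]

private lemma conj_mul_one_of {z : ℂ} (h : ‖z‖ = 1) : z * conj z = 1 := by
  rw [Complex.mul_conj]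
  norm_cast
  simp [← Complex.sq_norm, h]

private lemma sqrt_half_norm {c w : ℂ} (hc : 2 * (c * conj c) = 1) (hw : ‖w‖ = 1) :
    ‖(Real.sqrt 2 : ℂ) * c * conj w‖ = 1 := by
  have h1 : (Complex.normSq c : ℂ) = ((1/2 : ℝ) : ℂ) := by
    rw [← Complex.mul_conj]; push_cast; linear_combination hc/2
  have h2 : Complex.normSq c = 1/2 := Complex.ofReal_inj.mp h1
  have hc' : ‖c‖ ^ 2 = 1/2 := by rw [Complex.sq_norm, h2]
  rw [norm_mul, norm_mul, RCLike.norm_conj, hw, mul_one, Complex.norm_real,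
    Real.norm_eq_abs, _root_.abs_of_nonneg (Real.sqrt_nonneg 2)]
  have hsq : (Real.sqrt 2 * ‖c‖) ^ 2 = 1 := by
    rw [mul_pow, Real.sq_sqrt (by norm_num : (0:ℝ) ≤ 2), hc']; norm_num
  calc Real.sqrt 2 * ‖c‖ = Real.sqrt ((Real.sqrt 2 * ‖c‖)^2) := (Real.sqrt_sq (by positivity)).symm
  _ = 1 := by rw [hsq, Real.sqrt_one]

set_option maxHeartbeats 4000000 in
theorem pattern_preserving_unitary (U : Matrix (Fin 2) (Fin 2) ℂ)
    (hU : Uᴴ * U = 1)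
    (S : Set (Matrix (Fin 2) (Fin 2) ℂ))
    (hS : Submodule.span ℂ S = ⊤)
    (hpat : ∀ A ∈ S, HasPattern A ∧ HasPattern (U * A * Uᴴ)) :
    ((∃ ω ω' : ℂ, ‖ω‖ = 1 ∧ ‖ω'‖ = 1 ∧
        (U = !![ω, 0; 0, ω'] ∨ U = !![0, ω; ω', 0])) ∨
      (∃ ω ω' ω'' : ℂ, ‖ω‖ = 1 ∧ ‖ω'‖ = 1 ∧ ‖ω''‖ = 1 ∧
        U = (ω'' * (Real.sqrt 2 : ℂ)⁻¹) • !![ω', -(star ω); ω, star ω'])) ∧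
    (({U * E00 * Uᴴ, U * E11 * Uᴴ} : Set (Matrix (Fin 2) (Fin 2) ℂ)) = {E00, E11} ∨
      ∃ θ : ℝ, ({U * E00 * Uᴴ, U * E11 * Uᴴ} : Set (Matrix (Fin 2) (Fin 2) ℂ)) =
        {Rz θ * Pplus * (Rz θ)ᴴ, Rz θ * Pminus * (Rz θ)ᴴ}) := by
  have hU' : U * Uᴴ = 1 := mul_eq_one_comm.mp hU
  have hdet0 : conj (U.det) * U.det = 1 := by
    have h := congrArg Matrix.det hU
    rwa [Matrix.det_mul, Matrix.det_conjTranspose, Matrix.det_one] at h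
  obtain ⟨a, b, c, d, rfl⟩ : ∃ a b c d, U = !![a, b; c, d] :=
    ⟨_, _, _, _, Matrix.eta_fin_two U⟩
  have r00 : a * conj a + b * conj b = 1 := by
    have := Matrix.ext_iff.mpr hU' 0 0
    simp [Matrix.mul_apply, Fin.sum_univ_two, Matrix.conjTranspose_apply, Matrix.one_apply] at this
    linear_combination this
  have r01 : a * conj c + b * conj d = 0 := by
    have := Matrix.ext_iff.mpr hU' 0 1
    simp [Matrix.mul_apply, Fin.sum_univ_two, Matrix.conjTranspose_apply, Matrix.one_apply] at this
    linear_combination this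
  have r10 : c * conj a + d * conj b = 0 := by
    have := Matrix.ext_iff.mpr hU' 1 0
    simp [Matrix.mul_apply, Fin.sum_univ_two, Matrix.conjTranspose_apply, Matrix.one_apply] at this
    linear_combination this
  have r11 : c * conj c + d * conj d = 1 := by
    have := Matrix.ext_iff.mpr hU' 1 1
    simp [Matrix.mul_apply, Fin.sum_univ_two, Matrix.conjTranspose_apply, Matrix.one_apply] at this
    linear_combination this
  have c00 : conj a * a + conj c * c = 1 := by
    have := Matrix.ext_iff.mpr hU 0 0
    simp [Matrix.mul_apply, Fin.sum_univ_two, Matrix.conjTranspose_apply, Matrix.one_apply] at this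
    linear_combination this
  have c01 : conj a * b + conj c * d = 0 := by
    have := Matrix.ext_iff.mpr hU 0 1
    simp [Matrix.mul_apply, Fin.sum_univ_two, Matrix.conjTranspose_apply, Matrix.one_apply] at this
    linear_combination this
  have hdet : (conj a * conj d - conj b * conj c) * (a * d - b * c) = 1 := by
    rw [Matrix.det_fin_two_of, map_sub, _root_.map_mul, _root_.map_mul] at hdet0
    linear_combination hdet0
  have hP0 : !![a,b;c,d] * E00 * !![a,b;c,d]ᴴ
      = !![a * conj a, a * conj c; c * conj a, c * conj c] := by
    ext i j
    fin_cases i <;> fin_cases j <;>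
      simp [E00, Matrix.mul_apply, Fin.sum_univ_two, Matrix.conjTranspose_apply] <;> ring
  have hP1 : !![a,b;c,d] * E11 * !![a,b;c,d]ᴴ
      = !![b * conj b, b * conj d; d * conj b, d * conj d] := by
    ext i j
    fin_cases i <;> fin_cases j <;>
      simp [E11, Matrix.mul_apply, Fin.sum_univ_two, Matrix.conjTranspose_apply] <;> ring
  by_cases hc : c = 0
  · -- diagonal case
    subst hc
    simp only [map_zero] at c00 c01 r01 r10 r11
    have ha1' : conj a * a = 1 := by linear_combination c00
    have hca : conj a ≠ 0 := left_ne_zero_of_mul_eq_one ha1'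
    have hb : b = 0 := by
      have h5 : conj a * b = 0 := by linear_combination c01
      exact (mul_eq_zero.mp h5).resolve_left hca
    subst hb
    have ha1 : a * conj a = 1 := by linear_combination ha1'
    have hd1 : d * conj d = 1 := by linear_combination r11
    constructor
    · exact Or.inl ⟨a, d, norm_one_of ha1, norm_one_of hd1, Or.inl rfl⟩
    · left
      have e0 : !![a,0;0,d] * E00 * !![a,0;0,d]ᴴ = E00 := by
        rw [hP0]; ext i j; fin_cases i <;> fin_cases j <;> simp [E00, ha1]
      have e1 : !![a,0;0,d] * E11 * !![a,0;0,d]ᴴ = E11 := by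
        rw [hP1]; ext i j; fin_cases i <;> fin_cases j <;> simp [E11, hd1]
      rw [e0, e1]
  · by_cases ha : a = 0
    · -- antidiagonal case
      subst ha
      simp only [map_zero] at c00 c01 r00 r01 r10
      have hc1' : conj c * c = 1 := by linear_combination c00
      have hcc : conj c ≠ 0 := left_ne_zero_of_mul_eq_one hc1'
      have hd : d = 0 := by
        have h5 : conj c * d = 0 := by linear_combination c01
        exact (mul_eq_zero.mp h5).resolve_left hcc
      subst hd
      have hb1 : b * conj b = 1 := by linear_combination r00
      have hc1 : c * conj c = 1 := by linear_combination r11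
      constructor
      · exact Or.inl ⟨b, c, norm_one_of hb1, norm_one_of hc1, Or.inr rfl⟩
      · left
        have e0 : !![0,b;c,0] * E00 * !![0,b;c,0]ᴴ = E11 := by
          rw [hP0]; ext i j; fin_cases i <;> fin_cases j <;> simp [E11, hc1]
        have e1 : !![0,b;c,0] * E11 * !![0,b;c,0]ᴴ = E00 := by
          rw [hP1]; ext i j; fin_cases i <;> fin_cases j <;> simp [E00, hb1]
        rw [e0, e1]
        exact Set.pair_comm _ _
    · -- generic case : a ≠ 0, c ≠ 0, hence b ≠ 0, d ≠ 0
      have hca : conj a ≠ 0 := fun h => ha (by simpa using congrArg conj h)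
      have hcc' : conj c ≠ 0 := fun h => hc (by simpa using congrArg conj h)
      have hbd : b * conj d ≠ 0 := by
        intro h
        have h2 : a * conj c = 0 := by linear_combination r01 - h
        exact (mul_eq_zero.mp h2).elim ha hcc'
      have hb : b ≠ 0 := fun h => hbd (by rw [h, zero_mul])
      have hcd : conj d ≠ 0 := fun h => hbd (by rw [h, mul_zero])
      have hd : d ≠ 0 := fun h => hcd (by rw [h, map_zero])
      have hcb : conj b ≠ 0 := fun h => hb (by simpa using congrArg conj h)
      have hdb : conj a * conj d - conj b * conj c ≠ 0 := left_ne_zero_of_mul_eq_one hdet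
      by_cases hbal : 2 * (a * conj a) = 1
      · -- balanced case
        have hcc2 : 2 * (c * conj c) = 1 := by linear_combination 2 * c00 - hbal
        have hbb2 : 2 * (b * conj b) = 1 := by linear_combination 2 * r00 - hbal
        have hdd2 : 2 * (d * conj d) = 1 := by linear_combination 2 * r11 - hcc2
        have hΔ1 : (a*d - b*c) * conj (a*d - b*c) = 1 := by
          rw [map_sub, _root_.map_mul, _root_.map_mul]; linear_combination hdet
        have hΔn : ‖a*d - b*c‖ = 1 := norm_one_of hΔ1
        have hΔne : a*d - b*c ≠ 0 := left_ne_zero_of_mul_eq_one hΔ1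
        have hwsq : (Complex.exp (Complex.log (a*d - b*c) / 2))^2 = a*d - b*c := by
          rw [sq, ← Complex.exp_add]; norm_num [Complex.exp_log hΔne]
        set w : ℂ := Complex.exp (Complex.log (a*d - b*c) / 2) with hw
        have hwn : ‖w‖ = 1 := by
          rw [hw, Complex.norm_exp]
          have h0 : (Complex.log (a*d - b*c) / 2).re = 0 := by
            rw [Complex.div_re]
            simp [Complex.log_re, hΔn]
          rw [h0, Real.exp_zero]
        have hwc : w * conj w = 1 := conj_mul_one_of hwn
        have hb' : b = -(conj c) * (a*d - b*c) := by linear_combination d * r01 - b * r11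
        have hd' : d = conj a * (a*d - b*c) := by linear_combination (-d) * c00 + c * c01
        have h₂ : ((Real.sqrt 2 : ℝ) : ℂ) * ((Real.sqrt 2 : ℝ) : ℂ) = 2 := by
          rw [← Complex.ofReal_mul, Real.mul_self_sqrt (by norm_num : (0:ℝ) ≤ 2)]
          norm_num
        have hs2ne : ((Real.sqrt 2 : ℝ) : ℂ) ≠ 0 := by
          intro h0
          rw [h0, mul_zero] at h₂
          norm_num at h₂
        constructor
        · right
          refine ⟨(Real.sqrt 2 : ℂ) * c * conj w, (Real.sqrt 2 : ℂ) * a * conj w, w,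
            sqrt_half_norm hcc2 hwn, sqrt_half_norm hbal hwn, hwn, ?_⟩
          have haux1 : ∀ z : ℂ, w * ((Real.sqrt 2 : ℝ) : ℂ)⁻¹ * ((Real.sqrt 2 : ℂ) * z * conj w)
              = z * (w * conj w) := by
            intro z; field_simp
          have haux2 : ∀ z : ℂ, w * ((Real.sqrt 2 : ℝ) : ℂ)⁻¹ * ((Real.sqrt 2 : ℂ) * z * w)
              = z * w ^ 2 := by
            intro z; field_simp
          have hsw00 : a = w * ((Real.sqrt 2 : ℝ) : ℂ)⁻¹ * ((Real.sqrt 2 : ℂ) * a * conj w) := by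
            rw [haux1, hwc, mul_one]
          have hsw10 : c = w * ((Real.sqrt 2 : ℝ) : ℂ)⁻¹ * ((Real.sqrt 2 : ℂ) * c * conj w) := by
            rw [haux1, hwc, mul_one]
          have hsw01 : b = w * ((Real.sqrt 2 : ℝ) : ℂ)⁻¹ *
              (-((Real.sqrt 2 : ℂ) * conj c * w)) := by
            rw [mul_neg, haux2, hwsq]; linear_combination hb'
          have hsw11 : d = w * ((Real.sqrt 2 : ℝ) : ℂ)⁻¹ *
              ((Real.sqrt 2 : ℂ) * conj a * w) := by
            rw [haux2, hwsq]; exact hd'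
          ext i j
          fin_cases i <;> fin_cases j <;>
            simp [Matrix.smul_apply, Complex.conj_ofReal, smul_eq_mul]
          · linear_combination hsw00
          · linear_combination hsw01
          · linear_combination hsw10
          · linear_combination hsw11
        · right
          have hcne : conj (2 * c * conj a) = 2 * conj c * a := by
            have h2c : conj (2:ℂ) = 2 := Complex.conj_eq_iff_im.mpr (by norm_num)
            rw [_root_.map_mul, _root_.map_mul, Complex.conj_conj, h2c]
          have hen1 : (2 * c * conj a) * conj (2 * c * conj a) = 1 := by
            rw [hcne]
            linear_combination (2 * (a * conj a)) * hcc2 + hbal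
          have hexp : Complex.exp (((2 * c * conj a).arg : ℂ) * Complex.I) = 2 * c * conj a := by
            have h5 := Complex.norm_mul_exp_arg_mul_I (2 * c * conj a)
            rwa [norm_one_of hen1, Complex.ofReal_one, one_mul] at h5
          refine ⟨(2 * c * conj a).arg, ?_⟩
          have q0 : !![a,b;c,d] * E00 * !![a,b;c,d]ᴴ
              = Rz ((2 * c * conj a).arg) * Pplus * (Rz ((2 * c * conj a).arg))ᴴ := by
            rw [hP0]
            ext i j
            fin_cases i <;> fin_cases j <;>
              simp [Rz, Pplus, Matrix.mul_apply, Fin.sum_univ_two,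
                Matrix.conjTranspose_apply, Matrix.smul_apply, smul_eq_mul, hexp, hcne] <;>
              first
              | linear_combination hbal / 2
              | linear_combination (-(c * conj c)) * hbal
              | ring
          have q1 : !![a,b;c,d] * E11 * !![a,b;c,d]ᴴ
              = Rz ((2 * c * conj a).arg) * Pminus * (Rz ((2 * c * conj a).arg))ᴴ := by
            rw [hP1]
            ext i j
            fin_cases i <;> fin_cases j <;>
              simp [Rz, Pminus, Matrix.mul_apply, Fin.sum_univ_two,
                Matrix.conjTranspose_apply, Matrix.smul_apply, smul_eq_mul, hexp, hcne] <;>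
              first
              | linear_combination hbb2 / 2
              | linear_combination r01
              | linear_combination r10
              | linear_combination hdd2 / 2 - hcc2 / 2 - (c * conj c) * hbal
              | ring
          rw [q0, q1]
      · -- unbalanced: contradiction with spanning
        exfalso
        have hbal' : 2 * (a * conj a) - 1 ≠ 0 := sub_ne_zero.mpr hbal
        have hkey : a * d * conj a * conj d - b * c * conj b * conj c
            = 2 * (a * conj a) - 1 := by
          linear_combination (a * conj a) * r11 - (c * conj c) * r00 - c00
        have hsub : S ⊆ (Submodule.span ℂ
            ({1, !![0, -(b * conj a); a * conj b, 0]} :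
              Set (Matrix (Fin 2) (Fin 2) ℂ)) : Set (Matrix (Fin 2) (Fin 2) ℂ)) := by
          intro A hA
          obtain ⟨hpA, hpB⟩ := hpat A hA
          obtain ⟨e1, e2⟩ := pattern_mul hpB
          rw [SetLike.mem_coe, Submodule.mem_span_pair]
          obtain ⟨α, β, h4 | h4 | h4 | h4⟩ := hpA <;> subst h4
          · -- A = !![α, β; 0, 0]
            have hB00 : (!![a,b;c,d] * !![α,β;0,0] * !![a,b;c,d]ᴴ) 0 0
                = a * (α * conj a + β * conj b) := by
              simp [Matrix.mul_apply, Fin.sum_univ_two, Matrix.conjTranspose_apply]; ring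
            have hB10 : (!![a,b;c,d] * !![α,β;0,0] * !![a,b;c,d]ᴴ) 1 0
                = c * (α * conj a + β * conj b) := by
              simp [Matrix.mul_apply, Fin.sum_univ_two, Matrix.conjTranspose_apply]; ring
            have hB01 : (!![a,b;c,d] * !![α,β;0,0] * !![a,b;c,d]ᴴ) 0 1
                = a * (α * conj c + β * conj d) := by
              simp [Matrix.mul_apply, Fin.sum_univ_two, Matrix.conjTranspose_apply]; ring
            have hB11 : (!![a,b;c,d] * !![α,β;0,0] * !![a,b;c,d]ᴴ) 1 1
                = c * (α * conj c + β * conj d) := by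
              simp [Matrix.mul_apply, Fin.sum_univ_two, Matrix.conjTranspose_apply]; ring
            rw [hB00, hB10] at e1
            rw [hB01, hB11] at e2
            have f1 : α * conj a + β * conj b = 0 := by
              rcases mul_eq_zero.mp e1 with h | h
              · exact (mul_eq_zero.mp h).resolve_left ha
              · exact (mul_eq_zero.mp h).resolve_left hc
            have f2 : α * conj c + β * conj d = 0 := by
              rcases mul_eq_zero.mp e2 with h | h
              · exact (mul_eq_zero.mp h).resolve_left ha
              · exact (mul_eq_zero.mp h).resolve_left hc
            have hα : α = 0 := by
              have h3 : α * (conj a * conj d - conj b * conj c) = 0 := by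
                linear_combination conj d * f1 - conj b * f2
              exact (mul_eq_zero.mp h3).resolve_right hdb
            have hβ : β = 0 := by
              have h3 : β * conj b = 0 := by linear_combination f1 - conj a * hα
              exact (mul_eq_zero.mp h3).resolve_right hcb
            subst hα; subst hβ
            exact ⟨0, 0, by ext i j; fin_cases i <;> fin_cases j <;> simp⟩
          · -- A = !![α, 0; 0, β]
            have hB00 : (!![a,b;c,d] * !![α,0;0,β] * !![a,b;c,d]ᴴ) 0 0
                = α * (a * conj a) + β * (b * conj b) := by
              simp [Matrix.mul_apply, Fin.sum_univ_two, Matrix.conjTranspose_apply]; ring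
            have hB10 : (!![a,b;c,d] * !![α,0;0,β] * !![a,b;c,d]ᴴ) 1 0
                = α * (c * conj a) + β * (d * conj b) := by
              simp [Matrix.mul_apply, Fin.sum_univ_two, Matrix.conjTranspose_apply]; ring
            have hB01 : (!![a,b;c,d] * !![α,0;0,β] * !![a,b;c,d]ᴴ) 0 1
                = α * (a * conj c) + β * (b * conj d) := by
              simp [Matrix.mul_apply, Fin.sum_univ_two, Matrix.conjTranspose_apply]; ring
            have hB11 : (!![a,b;c,d] * !![α,0;0,β] * !![a,b;c,d]ᴴ) 1 1
                = α * (c * conj c) + β * (d * conj d) := by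
              simp [Matrix.mul_apply, Fin.sum_univ_two, Matrix.conjTranspose_apply]; ring
            rw [hB00, hB10] at e1
            rw [hB01, hB11] at e2
            rcases mul_eq_zero.mp e1 with h00 | h10 <;> rcases mul_eq_zero.mp e2 with h01 | h11
            · have hα : α = 0 := by
                have h3 : α * (a * (conj a * conj d - conj b * conj c)) = 0 := by
                  linear_combination conj d * h00 - conj b * h01
                exact (mul_eq_zero.mp h3).resolve_right (mul_ne_zero ha hdb)
              have hβ : β = 0 := by
                have h3 : β * (b * conj b) = 0 := by
                  linear_combination h00 - (a * conj a) * hα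
                exact (mul_eq_zero.mp h3).resolve_right (mul_ne_zero hb hcb)
              subst hα; subst hβ
              exact ⟨0, 0, by ext i j; fin_cases i <;> fin_cases j <;> simp⟩
            · -- h00, h11
              have hs : α + β = 0 := by
                linear_combination h00 + h11 - β * r00 - β * r11 + (β - α) * c00
              have h5 : β * (2 * (a * conj a) - 1) = 0 := by
                linear_combination (a * conj a) * hs + β * r00 - h00
              have hβ : β = 0 := (mul_eq_zero.mp h5).resolve_right hbal'
              have hα : α = 0 := by linear_combination hs - hβ
              subst hα; subst hβ
              exact ⟨0, 0, by ext i j; fin_cases i <;> fin_cases j <;> simp⟩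
            · -- h10, h01
              have h6 : (α - β) * (c * conj a) = 0 := by
                linear_combination h10 - β * r10
              have hαβ : α = β := by
                have h7 := (mul_eq_zero.mp h6).resolve_right (mul_ne_zero hc hca)
                linear_combination h7
              refine ⟨α, 0, ?_⟩
              rw [← hαβ]
              ext i j; fin_cases i <;> fin_cases j <;> simp [Matrix.one_apply]
            · -- h10, h11
              have hα : α = 0 := by
                have h3 : α * (c * (conj a * conj d - conj b * conj c)) = 0 := by
                  linear_combination conj d * h10 - conj b * h11
                exact (mul_eq_zero.mp h3).resolve_right (mul_ne_zero hc hdb)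
              have hβ : β = 0 := by
                have h3 : β * (d * conj b) = 0 := by
                  linear_combination h10 - (c * conj a) * hα
                exact (mul_eq_zero.mp h3).resolve_right (mul_ne_zero hd hcb)
              subst hα; subst hβ
              exact ⟨0, 0, by ext i j; fin_cases i <;> fin_cases j <;> simp⟩
          · -- A = !![0, β; α, 0]
            have hB00 : (!![a,b;c,d] * !![0,β;α,0] * !![a,b;c,d]ᴴ) 0 0
                = β * (a * conj b) + α * (b * conj a) := by
              simp [Matrix.mul_apply, Fin.sum_univ_two, Matrix.conjTranspose_apply]; ring
            have hB10 : (!![a,b;c,d] * !![0,β;α,0] * !![a,b;c,d]ᴴ) 1 0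
                = β * (c * conj b) + α * (d * conj a) := by
              simp [Matrix.mul_apply, Fin.sum_univ_two, Matrix.conjTranspose_apply]; ring
            have hB01 : (!![a,b;c,d] * !![0,β;α,0] * !![a,b;c,d]ᴴ) 0 1
                = β * (a * conj d) + α * (b * conj c) := by
              simp [Matrix.mul_apply, Fin.sum_univ_two, Matrix.conjTranspose_apply]; ring
            have hB11 : (!![a,b;c,d] * !![0,β;α,0] * !![a,b;c,d]ᴴ) 1 1
                = β * (c * conj d) + α * (d * conj c) := by
              simp [Matrix.mul_apply, Fin.sum_univ_two, Matrix.conjTranspose_apply]; ring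
            rw [hB00, hB10] at e1
            rw [hB01, hB11] at e2
            rcases mul_eq_zero.mp e1 with h00 | h10 <;> rcases mul_eq_zero.mp e2 with h01 | h11
            · have hα : α = 0 := by
                have h3 : α * (b * (conj a * conj d - conj b * conj c)) = 0 := by
                  linear_combination conj d * h00 - conj b * h01
                exact (mul_eq_zero.mp h3).resolve_right (mul_ne_zero hb hdb)
              have hβ : β = 0 := by
                have h3 : β * (a * conj b) = 0 := by
                  linear_combination h00 - (b * conj a) * hα
                exact (mul_eq_zero.mp h3).resolve_right (mul_ne_zero ha hcb)
              subst hα; subst hβ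
              exact ⟨0, 0, by ext i j; fin_cases i <;> fin_cases j <;> simp⟩
            · -- h00, h11 : line case
              refine ⟨0, α / (a * conj b), ?_⟩
              have habne : a * conj b ≠ 0 := mul_ne_zero ha hcb
              ext i j; fin_cases i <;> fin_cases j
              · simp
              · show (0 : ℂ) • (1 : Matrix (Fin 2) (Fin 2) ℂ) 0 1 + _ = _
                simp only [Matrix.add_apply, Matrix.smul_apply, Matrix.one_apply,
                  Matrix.cons_val', Matrix.cons_val_zero, Matrix.cons_val_one, Matrix.head_cons,
                  Matrix.head_fin_const, Matrix.empty_val', Matrix.cons_val_fin_one, smul_eq_mul,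
                  Matrix.of_apply, Fin.zero_eta, Fin.mk_one]
                field_simp
                linear_combination -h00
              · simp only [Matrix.add_apply, Matrix.smul_apply, Matrix.one_apply,
                  Matrix.cons_val', Matrix.cons_val_zero, Matrix.cons_val_one, Matrix.head_cons,
                  Matrix.head_fin_const, Matrix.empty_val', Matrix.cons_val_fin_one, smul_eq_mul,
                  Matrix.of_apply, Fin.zero_eta, Fin.mk_one]
                field_simp
                simp
              · simp
            · -- h10, h01
              have hα : α = 0 := by
                have h3 : α * (a * d * conj a * conj d - b * c * conj b * conj c) = 0 := by
                  linear_combination (a * conj d) * h10 - (c * conj b) * h01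
                rw [hkey] at h3
                exact (mul_eq_zero.mp h3).resolve_right hbal'
              have hβ : β = 0 := by
                have h3 : β * (c * conj b) = 0 := by
                  linear_combination h10 - (d * conj a) * hα
                exact (mul_eq_zero.mp h3).resolve_right (mul_ne_zero hc hcb)
              subst hα; subst hβ
              exact ⟨0, 0, by ext i j; fin_cases i <;> fin_cases j <;> simp⟩
            · -- h10, h11
              have hα : α = 0 := by
                have h3 : α * (d * (conj a * conj d - conj b * conj c)) = 0 := by
                  linear_combination conj d * h10 - conj b * h11
                exact (mul_eq_zero.mp h3).resolve_right (mul_ne_zero hd hdb)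
              have hβ : β = 0 := by
                have h3 : β * (c * conj b) = 0 := by
                  linear_combination h10 - (d * conj a) * hα
                exact (mul_eq_zero.mp h3).resolve_right (mul_ne_zero hc hcb)
              subst hα; subst hβ
              exact ⟨0, 0, by ext i j; fin_cases i <;> fin_cases j <;> simp⟩
          · -- A = !![0, 0; α, β]
            have hB00 : (!![a,b;c,d] * !![0,0;α,β] * !![a,b;c,d]ᴴ) 0 0
                = b * (α * conj a + β * conj b) := by
              simp [Matrix.mul_apply, Fin.sum_univ_two, Matrix.conjTranspose_apply]; ring
            have hB10 : (!![a,b;c,d] * !![0,0;α,β] * !![a,b;c,d]ᴴ) 1 0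
                = d * (α * conj a + β * conj b) := by
              simp [Matrix.mul_apply, Fin.sum_univ_two, Matrix.conjTranspose_apply]; ring
            have hB01 : (!![a,b;c,d] * !![0,0;α,β] * !![a,b;c,d]ᴴ) 0 1
                = b * (α * conj c + β * conj d) := by
              simp [Matrix.mul_apply, Fin.sum_univ_two, Matrix.conjTranspose_apply]; ring
            have hB11 : (!![a,b;c,d] * !![0,0;α,β] * !![a,b;c,d]ᴴ) 1 1
                = d * (α * conj c + β * conj d) := by
              simp [Matrix.mul_apply, Fin.sum_univ_two, Matrix.conjTranspose_apply]; ring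
            rw [hB00, hB10] at e1
            rw [hB01, hB11] at e2
            have f1 : α * conj a + β * conj b = 0 := by
              rcases mul_eq_zero.mp e1 with h | h
              · exact (mul_eq_zero.mp h).resolve_left hb
              · exact (mul_eq_zero.mp h).resolve_left hd
            have f2 : α * conj c + β * conj d = 0 := by
              rcases mul_eq_zero.mp e2 with h | h
              · exact (mul_eq_zero.mp h).resolve_left hb
              · exact (mul_eq_zero.mp h).resolve_left hd
            have hα : α = 0 := by
              have h3 : α * (conj a * conj d - conj b * conj c) = 0 := by
                linear_combination conj d * f1 - conj b * f2
              exact (mul_eq_zero.mp h3).resolve_right hdb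
            have hβ : β = 0 := by
              have h3 : β * conj b = 0 := by linear_combination f1 - conj a * hα
              exact (mul_eq_zero.mp h3).resolve_right hcb
            subst hα; subst hβ
            exact ⟨0, 0, by ext i j; fin_cases i <;> fin_cases j <;> simp⟩
        have hle : (⊤ : Submodule ℂ (Matrix (Fin 2) (Fin 2) ℂ)) ≤
            Submodule.span ℂ {1, !![0, -(b * conj a); a * conj b, 0]} := by
          rw [← hS]; exact Submodule.span_le.mpr hsub
        obtain ⟨x, y, hxy⟩ := Submodule.mem_span_pair.mp
          (hle (Submodule.mem_top (x := (E00 : Matrix (Fin 2) (Fin 2) ℂ))))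
        have h1 := Matrix.ext_iff.mpr hxy 0 0
        have h2 := Matrix.ext_iff.mpr hxy 1 1
        simp [E00, Matrix.one_apply] at h1 h2
        rw [h2] at h1
        exact one_ne_zero h1.symm
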